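/- For any positive semidefinite operator (or positive semidefinite matrix) P and any unitary matrix U on a finite-dimensional Hilbert space, and any positive integer ℓ, one has Tr((PU)^ℓ (U* P)^ℓ) ≤ Tr(P^{2ℓ}). -/

import Mathlib

open Matrix ComplexOrder

namespace TracePUAux

variable {n : ℕ}

lemma trace_mul_conjTranspose_self (A : Matrix (Fin n) (Fin n) ℂ) :
    (A * Aᴴ).trace = ((∑ i, ∑ j, Complex.normSq (A i j) : ℝ) : ℂ) := by
  push_cast
  rw [Matrix.trace]
  congr 1
  ext i
  rw [Matrix.diag_apply, Matrix.mul_apply]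
  congr 1
  ext j
  rw [Matrix.conjTranspose_apply, ← Complex.mul_conj]
  rfl

lemma norm_trace_mul_conjTranspose_self (A : Matrix (Fin n) (Fin n) ℂ) :
    ‖(A * Aᴴ).trace‖ = ((A * Aᴴ).trace).re := by
  rw [trace_mul_conjTranspose_self]
  rw [Complex.norm_real, Complex.ofReal_re, Real.norm_eq_abs]
  exact abs_of_nonneg (Finset.sum_nonneg fun i _ => Finset.sum_nonneg fun j _ => Complex.normSq_nonneg _)

lemma trace_cs (A B : Matrix (Fin n) (Fin n) ℂ) :
    ‖(A * B).trace‖ ≤ Real.sqrt ((A * Aᴴ).trace.re) * Real.sqrt ((B * Bᴴ).trace.re) := by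
  have htr : (A * B).trace = ∑ p : Fin n × Fin n, A p.1 p.2 * B p.2 p.1 := by
    rw [Matrix.trace, Fintype.sum_prod_type]
    refine Finset.sum_congr rfl fun i _ => ?_
    rw [Matrix.diag_apply, Matrix.mul_apply]
  have h1 : ‖(A * B).trace‖ ≤ ∑ p : Fin n × Fin n, ‖A p.1 p.2‖ * ‖B p.2 p.1‖ := by
    rw [htr]
    refine (norm_sum_le _ _).trans_eq ?_
    simp [norm_mul]
  refine h1.trans ?_
  have h2 := Real.sum_mul_le_sqrt_mul_sqrt (Finset.univ : Finset (Fin n × Fin n))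
    (fun p => ‖A p.1 p.2‖) (fun p => ‖B p.2 p.1‖)
  refine h2.trans_eq ?_
  congr 1
  · congr 1
    rw [trace_mul_conjTranspose_self, Complex.ofReal_re, Fintype.sum_prod_type]
    congr 1; ext i; congr 1; ext j
    rw [Complex.normSq_eq_norm_sq]
  · congr 1
    rw [trace_mul_conjTranspose_self, Complex.ofReal_re, Fintype.sum_prod_type]
    rw [Finset.sum_comm]
    congr 1; ext i; congr 1; ext j
    rw [Complex.normSq_eq_norm_sq]


section Words

variable {L : ℕ} (X : Fin L → Matrix (Fin n) (Fin n) ℂ)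

/-- value of a word -/
noncomputable def wval (w : List (Fin L)) : ℝ := ‖((w.map X).prod).trace‖

lemma wval_nonneg (w : List (Fin L)) : 0 ≤ wval X w := norm_nonneg _

lemma wval_swap (p q : List (Fin L)) : wval X (p ++ q) = wval X (q ++ p) := by
  unfold wval
  rw [List.map_append, List.prod_append, List.map_append, List.prod_append,
    Matrix.trace_mul_comm]

lemma prod_reverse_star (hX : ∀ a, (X a)ᴴ = X a) (w : List (Fin L)) :
    ((w.reverse.map X)).prod = (((w.map X)).prod)ᴴ := by
  induction w with
  | nil => simp
  | cons a w ih =>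
    simp only [List.reverse_cons, List.map_append, List.prod_append, ih, List.map_cons,
      List.map_nil, List.prod_cons, List.prod_nil, mul_one, Matrix.conjTranspose_mul, hX a]



lemma wval_palindrome_eq (hX : ∀ a, (X a)ᴴ = X a) (w : List (Fin L)) :
    wval X (w ++ w.reverse) = ((((w.map X).prod) * (((w.map X).prod))ᴴ).trace).re := by
  unfold wval
  rw [List.map_append, List.prod_append, prod_reverse_star X hX,
    norm_trace_mul_conjTranspose_self]

lemma wval_cs (hX : ∀ a, (X a)ᴴ = X a) (w₁ w₂ : List (Fin L)) :
    wval X (w₁ ++ w₂) ≤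
      Real.sqrt (wval X (w₁ ++ w₁.reverse)) * Real.sqrt (wval X (w₂ ++ w₂.reverse)) := by
  have h1 : wval X (w₁ ++ w₂) ≤
      Real.sqrt (((((w₁.map X).prod) * (((w₁.map X).prod))ᴴ).trace).re) *
      Real.sqrt (((((w₂.map X).prod) * (((w₂.map X).prod))ᴴ).trace).re) := by
    unfold wval
    rw [List.map_append, List.prod_append]
    exact trace_cs _ _
  rw [wval_palindrome_eq X hX w₁, wval_palindrome_eq X hX w₂]
  exact h1


theorem chessboard (hL : 0 < L)
    (hX : ∀ a, (X a)ᴴ = X a) (Nh : ℕ) (hNh : 0 < Nh)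
    (w : List (Fin L)) (hw : w.length = 2 * Nh) :
    ∃ a, wval X w ≤ ‖((X a) ^ (2 * Nh)).trace‖ := by
  have a0 : Fin L := ⟨0, hL⟩
  set S : Finset (List (Fin L)) :=
    Finset.image (fun v : Fin (2 * Nh) → Fin L => List.ofFn v) Finset.univ with hS
  have memS : ∀ l : List (Fin L), l.length = 2 * Nh → l ∈ S := by
    intro l hl
    rw [hS, Finset.mem_image]
    refine ⟨fun i => l.get (Fin.cast hl.symm i), Finset.mem_univ _, ?_⟩
    apply List.ext_getElem
    · simp [hl]
    · intro i h1 h2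
      simp [List.getElem_ofFn, List.get_eq_getElem]
  have Sne : S.Nonempty := ⟨List.replicate (2 * Nh) a0, memS _ List.length_replicate⟩
  set T : Finset ℝ := S.image (wval X) with hT
  have Tne : T.Nonempty := Sne.image _
  set M : ℝ := T.max' Tne with hM
  have hle : ∀ l : List (Fin L), l.length = 2 * Nh → wval X l ≤ M := by
    intro l hl
    exact Finset.le_max' _ _ (Finset.mem_image_of_mem _ (memS l hl))
  rcases le_or_gt M 0 with hM0 | hM0
  · exact ⟨a0, (hle w hw).trans (hM0.trans (norm_nonneg _))⟩
  have closure : ∀ w₁ w₂ : List (Fin L), w₁.length = Nh → w₂.length = Nh →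
      wval X (w₁ ++ w₂) = M → wval X (w₁ ++ w₁.reverse) = M := by
    intro w₁ w₂ h1 h2 hv
    have hcs := wval_cs X hX w₁ w₂
    have hlen1 : (w₁ ++ w₁.reverse).length = 2 * Nh := by
      simp [h1]; omega
    have hlen2 : (w₂ ++ w₂.reverse).length = 2 * Nh := by
      simp [h2]; omega
    have hle1 : wval X (w₁ ++ w₁.reverse) ≤ M := hle _ hlen1
    have hle2 : wval X (w₂ ++ w₂.reverse) ≤ M := hle _ hlen2
    set v₁ := wval X (w₁ ++ w₁.reverse) with hv₁
    set v₂ := wval X (w₂ ++ w₂.reverse) with hv₂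
    have hv1n : 0 ≤ v₁ := wval_nonneg _ _
    have h3 : M ≤ Real.sqrt v₁ * Real.sqrt M := by
      calc M = wval X (w₁ ++ w₂) := hv.symm
      _ ≤ Real.sqrt v₁ * Real.sqrt v₂ := hcs
      _ ≤ Real.sqrt v₁ * Real.sqrt M :=
          mul_le_mul_of_nonneg_left (Real.sqrt_le_sqrt hle2) (Real.sqrt_nonneg _)
    have hsM : Real.sqrt M ≤ Real.sqrt v₁ := by
      have h4 : Real.sqrt M * Real.sqrt M ≤ Real.sqrt v₁ * Real.sqrt M := by
        rw [Real.mul_self_sqrt hM0.le]; exact h3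
      exact le_of_mul_le_mul_right h4 (Real.sqrt_pos.mpr hM0)
    have hMv1 : M ≤ v₁ := by
      calc M = Real.sqrt M * Real.sqrt M := (Real.mul_self_sqrt hM0.le).symm
      _ ≤ Real.sqrt v₁ * Real.sqrt v₁ := mul_le_mul hsM hsM (Real.sqrt_nonneg _) (Real.sqrt_nonneg _)
      _ = v₁ := Real.mul_self_sqrt hv1n
    exact le_antisymm hle1 hMv1
  have constCase : ∀ (b : ℕ) (a : Fin L) (t : List (Fin L)), Nh ≤ b →
      (List.replicate b a ++ t).length = 2 * Nh →
      wval X (List.replicate b a ++ t) = M →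
      wval X (List.replicate (2 * Nh) a) = M := by
    intro b a t hb hlen hv
    have hbsplit : List.replicate b a ++ t
        = List.replicate Nh a ++ (List.replicate (b - Nh) a ++ t) := by
      rw [← List.append_assoc, ← List.replicate_add]
      congr 2
      omega
    rw [hbsplit] at hv
    have h2 : (List.replicate (b - Nh) a ++ t).length = Nh := by
      simp at hlen ⊢
      omega
    have hcl := closure _ _ (by simp) h2 hv
    rwa [List.reverse_replicate, ← List.replicate_add, ← two_mul] at hcl
  have grow : ∀ (d b : ℕ) (a : Fin L) (t : List (Fin L)), 0 < b → Nh ≤ b + d →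
      (List.replicate b a ++ t).length = 2 * Nh →
      wval X (List.replicate b a ++ t) = M →
      ∃ a', wval X (List.replicate (2 * Nh) a') = M := by
    intro d
    induction d with
    | zero =>
      intro b a t hb hbd hlen hv
      exact ⟨a, constCase b a t (by omega) hlen hv⟩
    | succ d ih =>
      intro b a t hb hbd hlen hv
      rcases le_or_gt Nh b with hcase | hcase
      · exact ⟨a, constCase b a t hcase hlen hv⟩
      · set t' := t.take Nh with ht'
        set s := t.drop Nh with hsdef
        have htlen : t.length = 2 * Nh - b := by
          simp at hlen; omega
        have hts : t = t' ++ s := (List.take_append_drop _ _).symm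
        have ht'len : t'.length = Nh := by
          rw [ht', List.length_take]; omega
        have hslen : s.length = Nh - b := by
          rw [hsdef, List.length_drop]; omega
        have hv2 : wval X ((s ++ List.replicate b a) ++ t') = M := by
          rw [List.append_assoc, wval_swap]
          rw [hts, ← List.append_assoc] at hv
          exact hv
        have hw1len : (s ++ List.replicate b a).length = Nh := by
          simp [hslen]; omega
        have hc := closure _ _ hw1len ht'len hv2
        rw [List.reverse_append, List.reverse_replicate] at hc
        have hv3 : wval X (List.replicate (2 * b) a ++ (s.reverse ++ s)) = M := by
          have e1 : (s ++ List.replicate b a) ++ (List.replicate b a ++ s.reverse)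
              = s ++ (List.replicate b a ++ (List.replicate b a ++ s.reverse)) := by
            simp [List.append_assoc]
          rw [e1, wval_swap] at hc
          have e2 : (List.replicate b a ++ (List.replicate b a ++ s.reverse)) ++ s
              = List.replicate (2 * b) a ++ (s.reverse ++ s) := by
            simp only [two_mul, List.replicate_add, List.append_assoc]
          rwa [e2] at hc
        have hlen3 : (List.replicate (2 * b) a ++ (s.reverse ++ s)).length = 2 * Nh := by
          simp [hslen]; omega
        exact ih (2 * b) a (s.reverse ++ s) (by omega) (by omega) hlen3 hv3
  have hMmem : M ∈ T := Finset.max'_mem _ _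
  rw [hT, Finset.mem_image] at hMmem
  obtain ⟨l₀, hl₀S, hl₀⟩ := hMmem
  have hl₀len : l₀.length = 2 * Nh := by
    rw [hS, Finset.mem_image] at hl₀S
    obtain ⟨v, _, rfl⟩ := hl₀S
    simp
  obtain ⟨a₀, t₀, rfl⟩ : ∃ a t, l₀ = a :: t := by
    cases l₀ with
    | nil => simp at hl₀len; omega
    | cons a t => exact ⟨a, t, rfl⟩
  have hrep1 : (a₀ :: t₀) = List.replicate 1 a₀ ++ t₀ := by simp
  obtain ⟨a', ha'⟩ := grow (Nh - 1) 1 a₀ t₀ one_pos (by omega)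
    (by rw [← hrep1]; exact hl₀len) (by rw [← hrep1]; exact hl₀)
  refine ⟨a', ?_⟩
  have hfin : wval X (List.replicate (2 * Nh) a') = ‖((X a') ^ (2 * Nh)).trace‖ := by
    unfold wval
    rw [List.map_replicate, List.prod_replicate]
  exact le_of_le_of_eq (hle w hw) (ha'.symm.trans hfin)

end Words


lemma finRange_map_val (m : ℕ) : List.map (Fin.val) (List.finRange m) = List.range m := by
  apply List.ext_getElem
  · simp
  · intro i h1 h2
    simp

end TracePUAux

open TracePUAux in
theorem trace_PU_pow_le {n : ℕ} (P U : Matrix (Fin n) (Fin n) ℂ)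
    (hP : P.PosSemidef) (hU : U ∈ Matrix.unitaryGroup (Fin n) ℂ)
    (ℓ : ℕ) (hℓ : 0 < ℓ) :
    (((P * U) ^ ℓ * (Uᴴ * P) ^ ℓ).trace).re ≤ ((P ^ (2 * ℓ)).trace).re := by
  classical
  have hPh : Pᴴ = P := hP.1
  have hUne : U * Uᴴ = 1 := by
    have := Matrix.mem_unitaryGroup_iff.mp hU
    rwa [Matrix.star_eq_conjTranspose] at this
  have hU'e : Uᴴ * U = 1 := by
    have := Matrix.mem_unitaryGroup_iff'.mp hU
    rwa [Matrix.star_eq_conjTranspose] at this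
  set Y : ℕ → Matrix (Fin n) (Fin n) ℂ := fun j => U ^ j * P * (Uᴴ) ^ j with hY
  have hpowUU : ∀ j : ℕ, (Uᴴ) ^ j * U ^ j = 1 := by
    intro j
    induction j with
    | zero => simp
    | succ j ih =>
      rw [pow_succ (Uᴴ) j, pow_succ' U j, mul_assoc, ← mul_assoc Uᴴ U (U ^ j), hU'e,
        one_mul, ih]
  have hpowUU' : ∀ j : ℕ, U ^ j * (Uᴴ) ^ j = 1 := by
    intro j
    induction j with
    | zero => simp
    | succ j ih =>
      rw [pow_succ' U j, pow_succ (Uᴴ) j, mul_assoc, ← mul_assoc (U ^ j) ((Uᴴ) ^ j) Uᴴ, ih,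
        one_mul, hUne]
  have hPU_pow : ∀ m : ℕ, (P * U) ^ m = ((List.range m).map Y).prod * U ^ m := by
    intro m
    induction m with
    | zero => simp
    | succ m ih =>
      rw [pow_succ, ih, List.range_succ, List.map_append, List.prod_append]
      simp only [List.map_cons, List.map_nil, List.prod_cons, List.prod_nil, mul_one]
      rw [pow_succ U m]
      simp only [hY, mul_assoc]
      rw [← mul_assoc ((Uᴴ) ^ m) (U ^ m) U, hpowUU m, one_mul]
  have hYherm : ∀ j : ℕ, (Y j)ᴴ = Y j := by
    intro j
    simp only [hY]
    rw [Matrix.conjTranspose_mul, Matrix.conjTranspose_mul, Matrix.conjTranspose_pow,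
      Matrix.conjTranspose_pow, Matrix.conjTranspose_conjTranspose, hPh, mul_assoc]
  have hYpow : ∀ j m : ℕ, (Y j) ^ m = U ^ j * P ^ m * (Uᴴ) ^ j := by
    intro j m
    induction m with
    | zero => simpa using (hpowUU' j).symm
    | succ m ih =>
      rw [pow_succ, ih]
      simp only [hY, mul_assoc]
      rw [← mul_assoc ((Uᴴ) ^ j) (U ^ j) _, hpowUU j, one_mul, ← mul_assoc (P ^ m) P _,
        ← pow_succ]
  have hYtr : ∀ j m : ℕ, ((Y j) ^ m).trace = (P ^ m).trace := by
    intro j m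
    rw [hYpow, Matrix.trace_mul_cycle, hpowUU, one_mul]
  -- letters
  set X : Fin ℓ → Matrix (Fin n) (Fin n) ℂ := fun j => Y j.val with hX
  have hXherm : ∀ a : Fin ℓ, (X a)ᴴ = X a := fun a => hYherm a.val
  set w₀ : List (Fin ℓ) := List.finRange ℓ with hw₀
  have hmapw₀ : w₀.map X = (List.range ℓ).map Y := by
    rw [hw₀, hX]
    rw [show (fun j : Fin ℓ => Y j.val) = Y ∘ Fin.val from rfl, ← List.map_map,
      finRange_map_val]
  set A : Matrix (Fin n) (Fin n) ℂ := ((List.range ℓ).map Y).prod with hA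
  -- LHS matrix equals A * Aᴴ
  have hadj : (Uᴴ * P) ^ ℓ = ((P * U) ^ ℓ)ᴴ := by
    rw [Matrix.conjTranspose_pow]
    congr 1
    rw [Matrix.conjTranspose_mul, hPh]
  have hLHSm : (P * U) ^ ℓ * (Uᴴ * P) ^ ℓ = A * Aᴴ := by
    rw [hadj, hPU_pow ℓ, Matrix.conjTranspose_mul, ← hA, Matrix.conjTranspose_pow,
      mul_assoc, ← mul_assoc (U ^ ℓ) ((Uᴴ) ^ ℓ) Aᴴ, hpowUU' ℓ, one_mul]
  -- word value
  have hword : wval X (w₀ ++ w₀.reverse) = ‖(A * Aᴴ).trace‖ := by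
    unfold wval
    rw [List.map_append, List.prod_append, prod_reverse_star X hXherm, hmapw₀, ← hA]
  have hlenw : (w₀ ++ w₀.reverse).length = 2 * ℓ := by
    simp [hw₀]
    omega
  obtain ⟨a, ha⟩ := chessboard X hℓ hXherm ℓ hℓ (w₀ ++ w₀.reverse) hlenw
  have hXa : ((X a) ^ (2 * ℓ)).trace = (P ^ (2 * ℓ)).trace := hYtr a.val (2 * ℓ)
  have hRHS : ‖(P ^ (2 * ℓ)).trace‖ = ((P ^ (2 * ℓ)).trace).re := by
    have h2 : P ^ (2 * ℓ) = P ^ ℓ * (P ^ ℓ)ᴴ := by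
      rw [Matrix.conjTranspose_pow, hPh, ← pow_add, two_mul]
    rw [h2, norm_trace_mul_conjTranspose_self]
  calc (((P * U) ^ ℓ * (Uᴴ * P) ^ ℓ).trace).re = ((A * Aᴴ).trace).re := by rw [hLHSm]
  _ = ‖(A * Aᴴ).trace‖ := (norm_trace_mul_conjTranspose_self A).symm
  _ = wval X (w₀ ++ w₀.reverse) := hword.symm
  _ ≤ ‖((X a) ^ (2 * ℓ)).trace‖ := ha
  _ = ‖(P ^ (2 * ℓ)).trace‖ := by rw [hXa]
  _ = ((P ^ (2 * ℓ)).trace).re := hRHS
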